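/- Let T be a standard tableau and r_1 < r_2 < ... < r_{k-1} values smaller than every entry of T being column-inserted in decreasing order r_{k-1}, ..., r_1 into T. Then in the resulting tableau T', the entry r_i occupies a box in column i for each 1 ≤ i ≤ k-1. -/

import Mathlib

/-- Column insertion of a value into a tableau represented as a list of columns
(each column a strictly increasing list, read top to bottom). The value bumps the
smallest entry of the first column larger than it (or is appended at the bottom),
and any bumped entry is inserted into the next column. -/
def insertCol : ℕ → List (List ℕ) → List (List ℕ)
  | v, [] => [[v]]
  | v, c :: cs =>
    match c.find? (fun x => v < x) with
    | none => (c ++ [v]) :: cs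
    | some x => (c.map fun y => if y = x then v else y) :: insertCol x cs

/-- Place the entry `i` at the bottom of the `j`-th column (0-based). -/
def placeAt (i : ℕ) : ℕ → List (List ℕ) → List (List ℕ)
  | 0, [] => [[i]]
  | 0, c :: cs => (c ++ [i]) :: cs
  | _ + 1, [] => [[i]]
  | j + 1, c :: cs => c :: placeAt i j cs

/-- The shape of a tableau: the list of its column lengths. -/
def shapeOf (T : List (List ℕ)) : List ℕ := T.map List.length

/-- Index of the first position where two lists differ. -/
def diffIdx : List ℕ → List ℕ → ℕ
  | a :: as, b :: bs => if a = b then diffIdx as bs + 1 else 0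
  | _, _ => 0

/-- The Robinson–Schensted pair `(P, Q)` of a word `w = [w 1, …, w n]` (one-line
notation): `P` is obtained by column inserting `w n, w (n-1), …, w 1` into the empty
tableau, and `Q` records, with entry `i`, the box added at the `i`-th insertion step. -/
def RSpair (w : List ℕ) : List (List ℕ) × List (List ℕ) :=
  w.reverse.zipIdx.foldl (fun PQ p =>
    let P' := insertCol p.1 PQ.1
    (P', placeAt (p.2 + 1) (diffIdx (shapeOf PQ.1) (shapeOf P')) PQ.2)) ([], [])

/-- The Robinson–Schensted `P`-symbol (insertion tableau) of a word. -/
def Psymb (w : List ℕ) : List (List ℕ) := (RSpair w).1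

/-- The Robinson–Schensted `Q`-symbol (recording tableau) of a word. -/
def Qsymb (w : List ℕ) : List (List ℕ) := (RSpair w).2

/-- One-line notation (1-based values) of a permutation of `Fin n`. -/
def oneLine {n : ℕ} (w : Equiv.Perm (Fin n)) : List ℕ := List.ofFn fun i => (w i : ℕ) + 1

/-- The `P`-symbol of a permutation. Two permutations of `S_n` lie in the same right
Kazhdan–Lusztig cell iff their `P`-symbols coincide. -/
def RSP {n : ℕ} (w : Equiv.Perm (Fin n)) : List (List ℕ) := Psymb (oneLine w)

/-- The `Q`-symbol of a permutation. Two permutations of `S_n` lie in the same left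
Kazhdan–Lusztig cell iff their `Q`-symbols coincide. -/
def RSQ {n : ℕ} (w : Equiv.Perm (Fin n)) : List (List ℕ) := Qsymb (oneLine w)

/-- A list of columns is a standard tableau: columns are nonempty and strictly
increasing, column lengths weakly decrease, and rows strictly increase. -/
def ColsStandard (T : List (List ℕ)) : Prop :=
  (∀ c ∈ T, c ≠ [] ∧ c.Pairwise (· < ·)) ∧
  T.Chain' (fun c c' => c'.length ≤ c.length ∧ ∀ i < c'.length, c.getD i 0 < c'.getD i 0)

/-- A standard Young tableau with `n` boxes: standard, with entries exactly `1, …, n`. -/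
def IsSYT (n : ℕ) (T : List (List ℕ)) : Prop :=
  ColsStandard T ∧ T.flatten.Perm (List.range' 1 n)

/-- The (1-based) index of the column of `T` containing the entry `s`. -/
def colIndex (T : List (List ℕ)) (s : ℕ) : ℕ := T.findIdx (fun c => c.contains s) + 1

/-- The number of inversions `ℓ(f) = #{(i,j) : i < j, f i > f j}`. -/
def invNum {N : ℕ} (f : Fin N → ℕ) : ℕ :=
  (Finset.univ.filter fun p : Fin N × Fin N => p.1 < p.2 ∧ f p.2 < f p.1).card

/-- Ehresmann's tableau (rank-matrix) characterisation of the Bruhat order, stated for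
arbitrary functions: `f ≤ g` iff `#{i ≤ p : f i ≥ q} ≤ #{i ≤ p : g i ≥ q}` for all `p, q`. -/
def rankLE {N : ℕ} (f g : Fin N → ℕ) : Prop :=
  ∀ p q : ℕ,
    (Finset.univ.filter fun i : Fin N => (i : ℕ) ≤ p ∧ q ≤ f i).card ≤
      (Finset.univ.filter fun i : Fin N => (i : ℕ) ≤ p ∧ q ≤ g i).card

/-- The Bruhat order on the symmetric group `S_N`. -/
def bruhatLE {N : ℕ} (x y : Equiv.Perm (Fin N)) : Prop :=
  rankLE (fun i => (x i : ℕ)) (fun i => (y i : ℕ))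

/-- Equation (2.1) of Lanini–McNamara, in 0-based terms: given `x : Fin n → ℕ`
(0-based one-line values), produce the one-line values of `x' ∈ S_{n+t}`:
`x' i = k + i` for `i < t`; for `i ≥ t`, `x' i = x (i - t)` if `x (i - t) < k`
and `x' i = x (i - t) + t` otherwise. -/
def primeMap (n t k : ℕ) (x : Fin n → ℕ) : Fin (n + t) → ℕ := fun i =>
  if _h : (i : ℕ) < t then k + i
  else
    have hi : (i : ℕ) - t < n := by omega
    if x ⟨(i : ℕ) - t, hi⟩ < k then x ⟨(i : ℕ) - t, hi⟩ else x ⟨(i : ℕ) - t, hi⟩ + t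

def ColInv (U : List (List ℕ)) : Prop :=
  (∀ c ∈ U, c ≠ [] ∧ c.Pairwise (· < ·)) ∧
  U.IsChain (fun c c' => c.headD 0 < c'.headD 0)

def bumpAll (v : ℕ) : List (List ℕ) → List (List ℕ)
  | [] => [[v]]
  | c :: cs => (v :: c.tail) :: bumpAll (c.headD 0) cs

lemma headD_le_mem {c : List ℕ} (hs : c.Pairwise (· < ·)) {b : ℕ} (hb : b ∈ c) :
    c.headD 0 ≤ b := by
  cases c with
  | nil => simp at hb
  | cons a t =>
    rcases List.mem_cons.1 hb with rfl | hb
    · simp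
    · exact le_of_lt ((List.pairwise_cons.1 hs).1 b hb)

lemma mem_getD_flatten {U : List (List ℕ)} {j : ℕ} {b : ℕ} (hb : b ∈ U.getD j []) :
    b ∈ U.flatten := by
  by_cases h : j < U.length
  · rw [List.getD_eq_getElem _ _ h] at hb
    exact List.mem_flatten.2 ⟨U[j], List.getElem_mem h, hb⟩
  · rw [List.getD_eq_default _ _ (le_of_not_gt h)] at hb
    simp at hb

lemma mem_flatten_getD {U : List (List ℕ)} {b : ℕ} (hb : b ∈ U.flatten) :
    ∃ j, j < U.length ∧ b ∈ U.getD j [] := by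
  rcases List.mem_flatten.1 hb with ⟨c, hc, hbc⟩
  rcases List.mem_iff_getElem.1 hc with ⟨j, hj, rfl⟩
  exact ⟨j, hj, by rwa [List.getD_eq_getElem _ _ hj]⟩

lemma headD_lt_flatten : ∀ {c : List ℕ} {cs : List (List ℕ)}, ColInv (c :: cs) →
    ∀ b ∈ cs.flatten, c.headD 0 < b := by
  intro c cs
  induction cs generalizing c with
  | nil => intro _ b hb; simp at hb
  | cons c' cs' ih =>
    intro hinv b hb
    have hch := hinv.2
    rw [List.isChain_cons_cons] at hch
    have hinv' : ColInv (c' :: cs') := ⟨fun d hd => hinv.1 d (List.mem_cons_of_mem _ hd), hch.2⟩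
    rw [List.flatten_cons, List.mem_append] at hb
    rcases hb with hb' | hb'
    · have hs := hinv.1 c' (by simp)
      exact lt_of_lt_of_le hch.1 (headD_le_mem hs.2 hb')
    · exact lt_trans hch.1 (ih hinv' b hb')

lemma insert_eq_bump : ∀ (U : List (List ℕ)) (v : ℕ), ColInv U →
    (∀ b ∈ U.flatten, v < b) → insertCol v U = bumpAll v U := by
  intro U
  induction U with
  | nil => intro v _ _; rfl
  | cons c cs ih =>
    intro v hinv hsm
    obtain ⟨hne, hs⟩ := hinv.1 c (by simp)
    obtain ⟨a, t, rfl⟩ : ∃ a t, c = a :: t := by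
      cases c with
      | nil => exact absurd rfl hne
      | cons a t => exact ⟨a, t, rfl⟩
    have hva : v < a := hsm a (by simp)
    have hfind : (a :: t).find? (fun x => v < x) = some a :=
      List.find?_cons_of_pos (by simpa using hva)
    have hmap : ((a :: t).map fun y => if y = a then v else y) = v :: t := by
      rw [List.map_cons, if_pos rfl]
      congr 1
      refine (List.map_congr_left fun y hy => ?_).trans (List.map_id t)
      have : a < y := (List.pairwise_cons.1 hs).1 y hy
      simp [Nat.ne_of_gt this]
    have hinv' : ColInv cs := ⟨fun d hd => hinv.1 d (List.mem_cons_of_mem _ hd), hinv.2.tail⟩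
    have hrec : insertCol a cs = bumpAll a cs :=
      ih a hinv' (fun b hb => headD_lt_flatten hinv b hb)
    show insertCol v ((a :: t) :: cs) = _
    rw [insertCol]
    simp only [hfind, hmap, hrec]
    rfl

lemma bump_length : ∀ (U : List (List ℕ)) (v : ℕ), (bumpAll v U).length = U.length + 1 := by
  intro U
  induction U with
  | nil => intro v; rfl
  | cons c cs ih => intro v; simp [bumpAll, ih]

lemma bump_getD : ∀ (U : List (List ℕ)) (v i : ℕ), i ≤ U.length →
    (bumpAll v U).getD i [] =
      (if i = 0 then v else (U.getD (i - 1) []).headD 0) :: (U.getD i []).tail := by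
  intro U
  induction U with
  | nil =>
    intro v i hi
    obtain rfl := Nat.le_zero.1 hi
    rfl
  | cons c cs ih =>
    intro v i hi
    cases i with
    | zero => rfl
    | succ j =>
      show (bumpAll (c.headD 0) cs).getD j [] = _
      rw [ih (c.headD 0) j (by simpa using hi)]
      cases j with
      | zero => rfl
      | succ j' => rfl

lemma bump_headD : ∀ (U : List (List ℕ)) (v : ℕ), ((bumpAll v U).headD []).headD 0 = v := by
  intro U v; cases U <;> rfl

lemma bump_inv : ∀ (U : List (List ℕ)) (v : ℕ), ColInv U →
    (U ≠ [] → v < (U.headD []).headD 0) → ColInv (bumpAll v U) := by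
  intro U
  induction U with
  | nil =>
    intro v _ _
    refine ⟨?_, List.isChain_singleton _⟩
    intro c hc
    rw [show bumpAll v [] = [[v]] from rfl, List.mem_singleton] at hc
    subst hc
    exact ⟨by simp, List.pairwise_singleton _ v⟩
  | cons c cs ih =>
    intro v hinv hv
    have hva : v < c.headD 0 := hv (by simp)
    obtain ⟨hne, hs⟩ := hinv.1 c (by simp)
    obtain ⟨a, t, rfl⟩ : ∃ a t, c = a :: t := by
      cases c with
      | nil => exact absurd rfl hne
      | cons a t => exact ⟨a, t, rfl⟩
    have hch := hinv.2
    rw [List.isChain_cons] at hch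
    have hinv' : ColInv cs := ⟨fun d hd => hinv.1 d (List.mem_cons_of_mem _ hd), hch.2⟩
    have hrec : ColInv (bumpAll ((a :: t).headD 0) cs) := by
      refine ih _ hinv' fun hcs => ?_
      cases cs with
      | nil => exact absurd rfl hcs
      | cons c' cs' => exact hch.1 c' rfl
    show ColInv ((v :: t) :: bumpAll ((a :: t).headD 0) cs)
    constructor
    · intro d hd
      rcases List.mem_cons.1 hd with rfl | hd
      · refine ⟨by simp, ?_⟩
        rw [List.pairwise_cons]
        refine ⟨fun b hb => ?_, (List.pairwise_cons.1 hs).2⟩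
        exact lt_trans hva ((List.pairwise_cons.1 hs).1 b hb)
      · exact hrec.1 d hd
    · rw [List.isChain_cons]
      refine ⟨fun d hd => ?_, hrec.2⟩
      have : d = (bumpAll ((a :: t).headD 0) cs).headD [] := by
        cases h : bumpAll ((a :: t).headD 0) cs with
        | nil => rw [h] at hd; simp at hd
        | cons x xs => rw [h] at hd; simp at hd; simp [hd]
      rw [this, bump_headD]
      simpa using hva

lemma main_lemma : ∀ (rs : List ℕ) (T U : List (List ℕ)),
    ColInv T → rs.Pairwise (· < ·) → (∀ a ∈ rs, ∀ b ∈ T.flatten, a < b) →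
    U = rs.reverse.foldl (fun U v => insertCol v U) T →
    ColInv U ∧
    (∀ i, i < rs.length → ∃ c, U.getD i [] = rs.getD i 0 :: c ∧ ∀ b ∈ c, b ∈ T.flatten) ∧
    (∀ j, rs.length ≤ j → ∀ b ∈ U.getD j [], b ∈ T.flatten) := by
  intro rs
  induction rs with
  | nil =>
    intro T U hT _ _ hU
    subst hU
    exact ⟨hT, fun i hi => by simp at hi, fun j _ b hb => mem_getD_flatten hb⟩
  | cons r rs' ih =>
    intro T U hT hsort hsmall hU
    set f := fun (U : List (List ℕ)) (v : ℕ) => insertCol v U with hf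
    have hrev : (r :: rs').reverse = rs'.reverse ++ [r] := by simp
    set U' := rs'.reverse.foldl f T with hU'
    have hUeq : U = insertCol r U' := by
      rw [hU, hrev, List.foldl_append]
      rfl
    obtain ⟨hinv', h2', h3'⟩ := ih T U' hT (List.pairwise_cons.1 hsort).2
      (fun a ha => hsmall a (List.mem_cons_of_mem _ ha)) hU'
    -- rs'.length ≤ U'.length
    have hlenle : rs'.length ≤ U'.length := by
      by_contra h
      push_neg at h
      obtain ⟨c, hc, _⟩ := h2' U'.length h
      rw [List.getD_eq_default _ _ (le_refl _)] at hc
      exact absurd hc (by simp)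
    -- r < everything in U'
    have hrlt : ∀ b ∈ U'.flatten, r < b := by
      intro b hb
      obtain ⟨j, hj, hbj⟩ := mem_flatten_getD hb
      by_cases hjl : j < rs'.length
      · obtain ⟨c, hc, hcT⟩ := h2' j hjl
        rw [hc] at hbj
        rcases List.mem_cons.1 hbj with rfl | hbc
        · have : rs'.getD j 0 ∈ rs' := by
            rw [List.getD_eq_getElem _ _ hjl]; exact List.getElem_mem hjl
          exact (List.pairwise_cons.1 hsort).1 _ this
        · exact hsmall r (by simp) b (hcT b hbc)
      · exact hsmall r (by simp) b (h3' j (le_of_not_gt hjl) b hbj)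
    have hbump : U = bumpAll r U' := by
      rw [hUeq]; exact insert_eq_bump U' r hinv' hrlt
    -- tails are in T
    have htail : ∀ i, ∀ b ∈ (U'.getD i []).tail, b ∈ T.flatten := by
      intro i b hb
      by_cases hil : i < rs'.length
      · obtain ⟨c, hc, hcT⟩ := h2' i hil
        rw [hc] at hb
        exact hcT b hb
      · exact h3' i (le_of_not_gt hil) b (List.mem_of_mem_tail hb)
    refine ⟨?_, ?_, ?_⟩
    · rw [hbump]
      refine bump_inv U' r hinv' fun hne => ?_
      cases hUne : U' with
      | nil => exact absurd hUne hne
      | cons c cs =>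
        obtain ⟨hcne, _⟩ := hinv'.1 c (hUne ▸ by simp)
        refine hrlt _ (List.mem_flatten.2 ⟨c, hUne ▸ by simp, ?_⟩)
        cases c with
        | nil => exact absurd rfl hcne
        | cons a t => simp
    · intro i hi
      rw [hbump]
      cases i with
      | zero =>
        rw [bump_getD U' r 0 (Nat.zero_le _)]
        exact ⟨(U'.getD 0 []).tail, rfl, htail 0⟩
      | succ j =>
        have hjl : j < rs'.length := by simpa using hi
        rw [bump_getD U' r (j + 1) (by omega)]
        obtain ⟨c, hc, _⟩ := h2' j hjl
        refine ⟨(U'.getD (j + 1) []).tail, ?_, htail (j + 1)⟩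
        simp only [Nat.add_sub_cancel, hc]
        rfl
    · intro j hj b hb
      rw [hbump] at hb
      by_cases hjle : j ≤ U'.length
      · rw [bump_getD U' r j hjle] at hb
        have hj0 : j ≠ 0 := by simp at hj; omega
        rw [if_neg hj0] at hb
        rcases List.mem_cons.1 hb with rfl | hb'
        · have hj1 : j - 1 < U'.length := by omega
          have hmem : (U'.getD (j - 1) []).headD 0 ∈ U'.getD (j - 1) [] := by
            rw [List.getD_eq_getElem _ _ hj1]
            obtain ⟨hcne, _⟩ := hinv'.1 _ (List.getElem_mem hj1)
            cases h : U'[j-1] with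
            | nil => exact absurd h hcne
            | cons a t => simp
          refine h3' (j - 1) (by simp at hj; omega) _ hmem
        · exact htail j b hb'
      · rw [List.getD_eq_default] at hb
        · simp at hb
        · rw [bump_length]; omega

lemma getD_zero_headD (l : List ℕ) : l.getD 0 0 = l.headD 0 := by cases l <;> rfl

lemma colsStandard_colInv {T : List (List ℕ)} (hT : ColsStandard T) : ColInv T := by
  refine ⟨hT.1, ?_⟩
  have hch : T.IsChain _ := hT.2
  rw [List.isChain_iff_getElem] at hch ⊢
  intro i hi
  have h := hch i hi
  have hpos : 0 < (T[i + 1]).length := by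
    have := (hT.1 _ (List.getElem_mem (by omega : i + 1 < T.length))).1
    exact List.length_pos_iff.2 this
  have := h.2 0 hpos
  rwa [getD_zero_headD, getD_zero_headD] at this

/-- Special case of Lemma 2.2(1): column inserting values `r_{k-1} > ⋯ > r_1` smaller
than every entry of a standard tableau `T` places `r_i` in column `i`. -/
theorem small_insertions_go_to_successive_columns (T : List (List ℕ))
    (hT : ColsStandard T) (k : ℕ) (hk : 0 < k)
    (rs : List ℕ) (hlen : rs.length = k - 1) (hsort : rs.Pairwise (· < ·))
    (hsmall : ∀ a ∈ rs, ∀ b ∈ T.flatten, a < b)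
    (T' : List (List ℕ)) (hT' : T' = rs.reverse.foldl (fun U v => insertCol v U) T) :
    ∀ i, i < rs.length → colIndex T' (rs.getD i 0) = i + 1 := by
  obtain ⟨hinv, h2, h3⟩ := main_lemma rs T T' (colsStandard_colInv hT) hsort hsmall hT'
  intro i hi
  obtain ⟨c, hc, hcT⟩ := h2 i hi
  have hiT : i < T'.length := by
    by_contra h
    rw [List.getD_eq_default _ _ (le_of_not_gt h)] at hc
    exact absurd hc (by simp)
  have hsmem : rs.getD i 0 ∈ rs := by
    rw [List.getD_eq_getElem _ _ hi]; exact List.getElem_mem hi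
  unfold colIndex
  congr 1
  rw [List.findIdx_eq hiT]
  constructor
  · have hTi : T'[i] = rs.getD i 0 :: c := by
      rw [← List.getD_eq_getElem _ _ hiT, hc]
    rw [hTi]
    simp
  · intro j hj
    have hjT : j < T'.length := by omega
    have hjr : j < rs.length := by omega
    obtain ⟨cj, hcj, hcjT⟩ := h2 j hjr
    have hTj : T'[j] = rs.getD j 0 :: cj := by
      rw [← List.getD_eq_getElem _ _ hjT, hcj]
    have hlt : rs.getD j 0 < rs.getD i 0 := by
      rw [List.getD_eq_getElem _ _ hjr, List.getD_eq_getElem _ _ hi]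
      have hfin : (⟨j, hjr⟩ : Fin rs.length) < ⟨i, hi⟩ := hj
      exact hsort.rel_get_of_lt hfin
    have hnotmem : rs.getD i 0 ∉ T'[j] := by
      rw [hTj]
      intro hmem
      rcases List.mem_cons.1 hmem with heq | hmem'
      · omega
      · exact absurd (hsmall _ hsmem _ (hcjT _ hmem')) (lt_irrefl _)
    simpa using hnotmem
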